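/- For a finite MDP with absorbing sink φ, fix ρ ∈ [0,1], horizon H, an optimal safety policy μ* with associated optimal value functions V*_n, and a policy μ' used during execution. Suppose that for every time k ∈ {0, ..., H−1} and every path ω = (x(0), u(0), ..., x(k)) of positive probability under μ' with all x(t) ≠ φ, the acceptance condition ∏_{t=1}^{k} (Σ_{y≠φ} T(y | x(t-1), u(t-1))) · (1 − Σ_{y∈S} V*_{H-k-1}(y) T(y | x(k), u(k))) ≥ 1 − ρ holds, where u(k) = μ'_k(x(k)). Then the probability of reaching φ within H steps starting from any s_0 ≠ φ under μ' is at most ρ: V^{μ'}_H(s_0) ≤ ρ. -/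

import Mathlib

/-- Safety guarantee of the History-based Supervisor: if along every path of
positive probability under the executed policy `μ'` the acceptance condition
holds at every time instant, then the probability of reaching the sink `φ`
within `H` steps is at most `ρ`. -/
theorem stmt10
    {S U : Type} [Fintype S] [DecidableEq S] [Fintype U] [Nonempty S] [Nonempty U]
    (T : S → U → S → ℝ) (φ : S)
    (hT0 : ∀ x u y, 0 ≤ T x u y)
    (hT1 : ∀ x u, ∑ y, T x u y = 1)
    (hsink : ∀ u, T φ u φ = 1)
    (ρ : ℝ) (hρ0 : 0 ≤ ρ) (hρ1 : ρ ≤ 1)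
    (H : ℕ) (hH : 1 ≤ H)
    (Vs : ℕ → S → ℝ)
    (hVs0 : ∀ x, Vs 0 x = if x = φ then 1 else 0)
    (hVsS : ∀ n x, Vs (n + 1) x =
      if x = φ then 1
      else Finset.univ.inf' Finset.univ_nonempty (fun u => ∑ y, Vs n y * T x u y))
    (μ' : ℕ → S → U)
    (V : ℕ → S → ℝ)
    (hV0 : ∀ x, V 0 x = if x = φ then 1 else 0)
    (hVS : ∀ n x, V (n + 1) x =
      if x = φ then 1 else ∑ y, V n y * T x (μ' (H - n - 1) x) y)
    (s0 : S) (hs0 : s0 ≠ φ)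
    (hacc : ∀ k, k < H → ∀ x : ℕ → S,
      x 0 = s0 →
      (∀ t, t ≤ k → x t ≠ φ) →
      (∀ t, t < k → 0 < T (x t) (μ' t (x t)) (x (t + 1))) →
      (∏ t ∈ Finset.Icc 1 k,
          (∑ y ∈ Finset.univ.erase φ, T (x (t - 1)) (μ' (t - 1) (x (t - 1))) y)) *
        (1 - ∑ y, Vs (H - k - 1) y * T (x k) (μ' k (x k)) y) ≥ 1 - ρ) :
    V H s0 ≤ ρ := by
  classical
  -- Basic facts about Vs
  have hVs_nonneg : ∀ n x, 0 ≤ Vs n x := by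
    intro n
    induction n with
    | zero => intro x; rw [hVs0]; split <;> norm_num
    | succ n ih =>
      intro x; rw [hVsS]
      split
      · norm_num
      · apply Finset.le_inf'
        intro u _
        exact Finset.sum_nonneg fun y _ => mul_nonneg (ih y) (hT0 _ _ _)
  have hVφ : ∀ n, V n φ = 1 := by
    intro n; cases n with
    | zero => simp [hV0]
    | succ n => simp [hVS]
  have hV_le_one : ∀ n x, V n x ≤ 1 := by
    intro n
    induction n with
    | zero => intro x; rw [hV0]; split <;> norm_num
    | succ n ih =>
      intro x; rw [hVS]
      split
      · exact le_refl 1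
      · calc ∑ y, V n y * T x (μ' (H - n - 1) x) y
            ≤ ∑ y, T x (μ' (H - n - 1) x) y :=
              Finset.sum_le_sum fun y _ => mul_le_of_le_one_left (hT0 _ _ _) (ih y)
          _ = 1 := hT1 _ _
  by_cases hρge : 1 ≤ ρ
  · exact le_trans (hV_le_one H s0) hρge
  push_neg at hρge
  -- key downward induction
  have key : ∀ d, ∀ k, ∀ x : ℕ → S, k + d + 1 = H → x 0 = s0 →
      (∀ t, t ≤ k → x t ≠ φ) →
      (∀ t, t < k → 0 < T (x t) (μ' t (x t)) (x (t + 1))) →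
      1 - ρ ≤ (∏ t ∈ Finset.Icc 1 k,
          (∑ y ∈ Finset.univ.erase φ, T (x (t - 1)) (μ' (t - 1) (x (t - 1))) y)) *
        (1 - V (H - k) (x k)) := by
    intro d
    induction d with
    | zero =>
      intro k x hk hx0 hsafe hpos
      have hkH : k < H := by omega
      have h := hacc k hkH x hx0 hsafe hpos
      have h2 : H - k - 1 = 0 := by omega
      rw [h2] at h
      have hQ : ∑ y, Vs 0 y * T (x k) (μ' k (x k)) y = T (x k) (μ' k (x k)) φ := by
        simp [hVs0, ite_mul, Finset.sum_ite_eq']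
      rw [hQ] at h
      have h1 : H - k = 0 + 1 := by omega
      rw [h1, hVS, if_neg (hsafe k le_rfl)]
      have h3 : H - 0 - 1 = k := by omega
      rw [h3]
      have hV1 : ∑ y, V 0 y * T (x k) (μ' k (x k)) y = T (x k) (μ' k (x k)) φ := by
        simp [hV0, ite_mul, Finset.sum_ite_eq']
      rw [hV1]
      linarith [h]
    | succ d ih =>
      intro k x hk hx0 hsafe hpos
      have hkH : k < H := by omega
      have h := hacc k hkH x hx0 hsafe hpos
      set u := μ' k (x k) with hu
      set Q : ℝ := ∑ y, Vs (H - k - 1) y * T (x k) u y with hQdef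
      set P : ℝ := ∏ t ∈ Finset.Icc 1 k,
          (∑ y ∈ Finset.univ.erase φ, T (x (t - 1)) (μ' (t - 1) (x (t - 1))) y) with hPdef
      set Sk : ℝ := ∑ y ∈ Finset.univ.erase φ, T (x k) u y with hSkdef
      have hP0 : 0 ≤ P := by
        apply Finset.prod_nonneg
        intro t _
        exact Finset.sum_nonneg fun y _ => hT0 _ _ _
      have hP1 : P ≤ 1 := by
        apply Finset.prod_le_one
        · intro t _; exact Finset.sum_nonneg fun y _ => hT0 _ _ _
        · intro t _
          calc (∑ y ∈ Finset.univ.erase φ, T (x (t - 1)) (μ' (t - 1) (x (t - 1))) y)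
              ≤ ∑ y, T (x (t - 1)) (μ' (t - 1) (x (t - 1))) y :=
                Finset.sum_le_sum_of_subset_of_nonneg (Finset.erase_subset _ _)
                  (fun y _ _ => hT0 _ _ _)
            _ = 1 := hT1 _ _
      have hQ0 : 0 ≤ Q :=
        Finset.sum_nonneg fun y _ => mul_nonneg (hVs_nonneg _ _) (hT0 _ _ _)
      have hQφ : T (x k) u φ ≤ Q := by
        rw [hQdef, ← Finset.add_sum_erase _ _ (Finset.mem_univ φ)]
        have : Vs (H - k - 1) φ = 1 := by
          rcases Nat.eq_zero_or_eq_succ_pred (H - k - 1) with h0 | h0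
          · rw [h0, hVs0]; simp
          · rw [h0, hVsS]; simp
        rw [this, one_mul]
        have : 0 ≤ ∑ y ∈ Finset.univ.erase φ, Vs (H - k - 1) y * T (x k) u y :=
          Finset.sum_nonneg fun y _ => mul_nonneg (hVs_nonneg _ _) (hT0 _ _ _)
        linarith
      have hSkT : Sk = 1 - T (x k) u φ := by
        have h1 := hT1 (x k) u
        rw [← Finset.add_sum_erase _ _ (Finset.mem_univ φ)] at h1
        rw [hSkdef]; linarith
      have h1Q : 1 - ρ ≤ 1 - Q := by
        rcases le_or_gt 0 (1 - Q) with hc | hc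
        · nlinarith [mul_le_mul_of_nonneg_right hP1 hc]
        · nlinarith [mul_nonpos_of_nonneg_of_nonpos hP0 (le_of_lt hc)]
      have hSkpos : 0 < Sk := by rw [hSkT]; linarith
      clear_value u Q P Sk
      -- expand V (H - k)
      have hm : H - k = (H - k - 1) + 1 := by omega
      have hμ : H - (H - k - 1) - 1 = k := by omega
      rw [hm, hVS, if_neg (hsafe k le_rfl), hμ, ← hu]
      have hexp : 1 - ∑ y, V (H - k - 1) y * T (x k) u y
          = ∑ y ∈ Finset.univ.erase φ, (1 - V (H - k - 1) y) * T (x k) u y := by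
        have herase : ∑ y ∈ Finset.univ.erase φ, (1 - V (H - k - 1) y) * T (x k) u y
            = ∑ y, (1 - V (H - k - 1) y) * T (x k) u y := by
          apply Finset.sum_erase
          rw [hVφ]; ring
        rw [herase]
        simp only [sub_mul, one_mul, Finset.sum_sub_distrib, hT1]
      rw [hexp]
      -- per-term bound via IH
      rw [← mul_le_mul_iff_of_pos_right hSkpos]
      have hrhs : P * (∑ y ∈ Finset.univ.erase φ, (1 - V (H - k - 1) y) * T (x k) u y) * Sk
          = ∑ y ∈ Finset.univ.erase φ, (P * Sk * (1 - V (H - k - 1) y)) * T (x k) u y := by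
        rw [Finset.mul_sum, Finset.sum_mul]
        exact Finset.sum_congr rfl fun y _ => by ring
      have hlhs : (1 - ρ) * Sk = ∑ y ∈ Finset.univ.erase φ, (1 - ρ) * T (x k) u y := by
        rw [hSkdef, Finset.mul_sum]
      rw [hrhs, hlhs]
      apply Finset.sum_le_sum
      intro y hy
      have hyφ : y ≠ φ := Finset.ne_of_mem_erase hy
      rcases eq_or_lt_of_le (hT0 (x k) u y) with hTy | hTy
      · rw [← hTy, mul_zero, mul_zero]
      · have hbound : 1 - ρ ≤ P * Sk * (1 - V (H - k - 1) y) := by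
          set x' : ℕ → S := Function.update x (k + 1) y with hx'
          have hx'lt : ∀ t, t ≤ k → x' t = x t := by
            intro t ht
            exact Function.update_of_ne (by omega) _ _
          have hx'top : x' (k + 1) = y := Function.update_self _ _ _
          have ihh := ih (k + 1) x' (by omega)
            (by rw [hx'lt 0 (Nat.zero_le k)]; exact hx0)
            (by
              intro t ht
              rcases Nat.lt_or_ge t (k + 1) with h' | h'
              · rw [hx'lt t (by omega)]; exact hsafe t (by omega)
              · have : t = k + 1 := by omega
                rw [this, hx'top]; exact hyφ)
            (by
              intro t ht
              rcases Nat.lt_or_ge t k with h' | h'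
              · rw [hx'lt t (by omega), hx'lt (t + 1) (by omega)]
                exact hpos t h'
              · have : t = k := by omega
                subst this
                rw [hx'lt t le_rfl, hx'top, ← hu]
                exact hTy)
          have hHk : H - (k + 1) = H - k - 1 := by omega
          rw [hHk, hx'top] at ihh
          have hprod : (∏ t ∈ Finset.Icc 1 (k + 1),
              (∑ z ∈ Finset.univ.erase φ, T (x' (t - 1)) (μ' (t - 1) (x' (t - 1))) z))
              = P * Sk := by
            rw [Finset.prod_Icc_succ_top (by omega : 1 ≤ k + 1)]
            congr 1
            · rw [hPdef]
              apply Finset.prod_congr rfl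
              intro t ht
              rw [hx'lt (t - 1) (by
                have := (Finset.mem_Icc.mp ht).2; omega)]
            · have : k + 1 - 1 = k := by omega
              rw [this, hx'lt k le_rfl, ← hu, hSkdef]
          rw [hprod] at ihh
          linarith [ihh]
        exact mul_le_mul_of_nonneg_right hbound (le_of_lt hTy)
  -- conclude
  have h := key (H - 1) 0 (fun _ => s0) (by omega) rfl
    (fun t _ => hs0) (fun t ht => absurd ht (Nat.not_lt_zero t))
  simp only [Finset.Icc_eq_empty_of_lt (by norm_num : (0:ℕ) < 1), Finset.prod_empty,
    one_mul, Nat.sub_zero] at h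
  linarith
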